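/- Let k be a field of characteristic ≠ 2 containing a primitive r-th root of unity, where r ≥ 3 is an integer, and let K = k(a_1, …, a_{r−1}) be the rational function field in r−1 independent indeterminates over k. Let u_i := a_1^{r−i}·a_i + a_{r−1}^{r−i}·a_{r−i} ∈ K for 1 ≤ i ≤ r−1. Then the field extension K over the subfield k(u_1, …, u_{r−1}) is finite of degree exactly 2r. -/

import Mathlib

open scoped IntermediateField

/-- Scaling algebra automorphism of a multivariate polynomial ring, sending `X i` to
`C (c i) * X i`, with inverse scaling `d`. -/
noncomputable def dScale {k : Type*} [CommSemiring k] {n : Type*} (c d : n → k)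
    (h : ∀ i, c i * d i = 1) : MvPolynomial n k ≃ₐ[k] MvPolynomial n k :=
  AlgEquiv.ofAlgHom
    (MvPolynomial.aeval fun i => MvPolynomial.C (c i) * MvPolynomial.X i)
    (MvPolynomial.aeval fun i => MvPolynomial.C (d i) * MvPolynomial.X i)
    (by
      apply MvPolynomial.algHom_ext
      intro i
      simp only [AlgHom.comp_apply, MvPolynomial.aeval_X, map_mul, MvPolynomial.aeval_C,
        MvPolynomial.algebraMap_eq, AlgHom.id_apply]
      rw [← mul_assoc, ← MvPolynomial.C_mul, mul_comm (d i) (c i), h i, MvPolynomial.C_1, one_mul])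
    (by
      apply MvPolynomial.algHom_ext
      intro i
      simp only [AlgHom.comp_apply, MvPolynomial.aeval_X, map_mul, MvPolynomial.aeval_C,
        MvPolynomial.algebraMap_eq, AlgHom.id_apply]
      rw [← mul_assoc, ← MvPolynomial.C_mul, h i, MvPolynomial.C_1, one_mul])

theorem dScale_X {k : Type*} [CommSemiring k] {n : Type*} (c d : n → k)
    (h : ∀ i, c i * d i = 1) (i : n) :
    dScale c d h (MvPolynomial.X i) = MvPolynomial.C (c i) * MvPolynomial.X i :=
  MvPolynomial.aeval_X _ i

/-- The intermediate field of elements fixed by an algebra endomorphism. -/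
def fixedIF {k K : Type*} [Field k] [Field K] [Algebra k K] (ψ : K →ₐ[k] K) :
    IntermediateField k K where
  carrier := {x | ψ x = x}
  mul_mem' := by
    intro x y hx hy
    simp only [Set.mem_setOf_eq, map_mul] at *
    rw [hx, hy]
  one_mem' := map_one ψ
  add_mem' := by
    intro x y hx hy
    simp only [Set.mem_setOf_eq, map_add] at *
    rw [hx, hy]
  zero_mem' := map_zero ψ
  algebraMap_mem' := fun c => ψ.commutes c
  inv_mem' := by
    intro x hx
    simp only [Set.mem_setOf_eq] at *
    rw [map_inv₀, hx]

theorem mem_fixedIF {k K : Type*} [Field k] [Field K] [Algebra k K] {ψ : K →ₐ[k] K} {x : K} :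
    x ∈ fixedIF ψ ↔ ψ x = x := Iff.rfl

set_option maxHeartbeats 1000000 in
set_option synthInstance.maxHeartbeats 400000 in
/-- Let `k` be a field of characteristic `≠ 2` containing a primitive
`r`-th root of unity (`r ≥ 3`), and `K = k(a_1,…,a_(r-1))` the rational function field in
`r-1` indeterminates. With `u_i = a_1^(r-i)·a_i + a_(r-1)^(r-i)·a_(r-i)` the dihedral
invariants, the extension `K / k(u_1,…,u_(r-1))` is finite of degree exactly `2r`. -/
theorem finrank_over_dihedral_invariants {k K : Type*} [Field k] [Field K]
    (hchar : ringChar k ≠ 2) (r : ℕ) (hr : 3 ≤ r)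
    (η : k) (hη : IsPrimitiveRoot η r)
    [Algebra (MvPolynomial (Fin (r - 1)) k) K]
    [IsFractionRing (MvPolynomial (Fin (r - 1)) k) K]
    [Algebra k K] [IsScalarTower k (MvPolynomial (Fin (r - 1)) k) K]
    (a : ℕ → K)
    (ha : ∀ i : Fin (r - 1),
      a (i.1 + 1) = algebraMap (MvPolynomial (Fin (r - 1)) k) K (MvPolynomial.X i))
    (u : ℕ → K)
    (hu : ∀ i : ℕ, u i = a 1 ^ (r - i) * a i + a (r - 1) ^ (r - i) * a (r - i)) :
    FiniteDimensional
      (IntermediateField.adjoin k {x : K | ∃ i : ℕ, 1 ≤ i ∧ i ≤ r - 1 ∧ x = u i}) K ∧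
    Module.finrank
      (IntermediateField.adjoin k {x : K | ∃ i : ℕ, 1 ≤ i ∧ i ≤ r - 1 ∧ x = u i}) K =
      2 * r := by
  classical
  set R := MvPolynomial (Fin (r - 1)) k with hRdef
  set S : Set K := {x : K | ∃ i : ℕ, 1 ≤ i ∧ i ≤ r - 1 ∧ x = u i} with hSdef
  set F : IntermediateField k K := IntermediateField.adjoin k S with hFdef
  have huF : ∀ i, 1 ≤ i → i ≤ r - 1 → u i ∈ F :=
    fun i h1 h2 => IntermediateField.subset_adjoin k S ⟨i, h1, h2, rfl⟩
  clear_value F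
  have hr1 : 1 ≤ r - 1 := by omega
  have hrinj : Function.Injective (algebraMap R K) := IsFractionRing.injective R K
  have hkinj : Function.Injective (algebraMap k K) := (algebraMap k K).injective
  have h2k : (2 : k) ≠ 0 := Ring.two_ne_zero hchar
  have h2K : (2 : K) ≠ 0 := by
    have h : algebraMap k K 2 = 2 := map_ofNat _ 2
    rw [← h]
    exact fun hc => h2k (hkinj (by rw [hc, map_zero]))
  -- the generators
  have haX : ∀ j (hj1 : 1 ≤ j) (hj2 : j ≤ r - 1),
      a j = algebraMap R K (MvPolynomial.X (⟨j - 1, by omega⟩ : Fin (r - 1))) := by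
    intro j hj1 hj2
    have h' : a (j - 1 + 1)
        = algebraMap R K (MvPolynomial.X (⟨j - 1, by omega⟩ : Fin (r - 1))) :=
      ha ⟨j - 1, by omega⟩
    rwa [show j - 1 + 1 = j from by omega] at h'
  have ht0 : a 1 ≠ 0 := by
    rw [haX 1 le_rfl hr1]
    exact (map_ne_zero_iff _ hrinj).mpr (MvPolynomial.X_ne_zero _)
  have hs0 : a (r - 1) ≠ 0 := by
    rw [haX (r - 1) hr1 le_rfl]
    exact (map_ne_zero_iff _ hrinj).mpr (MvPolynomial.X_ne_zero _)
  have hD : a 1 ^ r - a (r - 1) ^ r ≠ 0 := by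
    rw [sub_ne_zero]
    intro hEq
    rw [haX 1 le_rfl hr1, haX (r - 1) hr1 le_rfl, ← map_pow, ← map_pow] at hEq
    have h' := hrinj hEq
    have h'' := congrArg (MvPolynomial.eval
      (fun i : Fin (r - 1) => if i.1 = 0 then (1 : k) else 0)) h'
    rw [map_pow, map_pow, MvPolynomial.eval_X, MvPolynomial.eval_X] at h''
    simp only [Fin.val_mk] at h''
    rw [if_pos trivial, if_neg (by omega : ¬(r - 1 - 1 = 0)), one_pow,
      zero_pow (by omega : r ≠ 0)] at h''
    exact one_ne_zero h''
  -- key algebraic identities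
  have h2ts : u (r - 1) = 2 * (a 1 * a (r - 1)) := by
    rw [hu (r - 1), show r - (r - 1) = 1 from by omega, pow_one, pow_one]
    ring
  have hu1 : u 1 = a 1 ^ r + a (r - 1) ^ r := by
    rw [hu 1]
    have e1 : a 1 ^ (r - 1) * a 1 = a 1 ^ r := by
      rw [← pow_succ]; congr 1; omega
    have e2 : a (r - 1) ^ (r - 1) * a (r - 1) = a (r - 1) ^ r := by
      rw [← pow_succ]; congr 1; omega
    rw [e1, e2]
  ----------------------------------------------------------------
  -- Part 1 : upper bound,  K = F(a 1) and [K : F] ≤ 2r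
  ----------------------------------------------------------------
  set E1 : IntermediateField F K := F⟮a 1⟯ with hE1def
  have hFE : ∀ x : K, x ∈ F → x ∈ E1 := fun x hx => E1.algebraMap_mem ⟨x, hx⟩
  have htE : a 1 ∈ E1 := IntermediateField.mem_adjoin_simple_self F (a 1)
  have huE : ∀ i, 1 ≤ i → i ≤ r - 1 → u i ∈ E1 := fun i h1 h2 => hFE _ (huF i h1 h2)
  have h2E : (2 : K) ∈ E1 := by
    have h : algebraMap k K 2 = 2 := map_ofNat _ 2
    rw [← h]
    exact hFE _ (F.algebraMap_mem 2)
  have hsE : a (r - 1) ∈ E1 := by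
    have hs' : a (r - 1) = u (r - 1) / (2 * a 1) := by
      rw [h2ts, show 2 * (a 1 * a (r - 1)) = a (r - 1) * (2 * a 1) from by ring,
        mul_div_assoc, div_self (mul_ne_zero h2K ht0), mul_one]
    rw [hs']
    exact div_mem (huE (r - 1) hr1 le_rfl) (mul_mem h2E htE)
  have haE : ∀ j, 1 ≤ j → j ≤ r - 1 → a j ∈ E1 := by
    intro j h1 h2
    have e1 : a 1 ^ j * a 1 ^ (r - j) = a 1 ^ r := by
      rw [← pow_add]; congr 1; omega
    have e2 : a (r - 1) ^ (r - j) * a (r - 1) ^ j = a (r - 1) ^ r := by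
      rw [← pow_add]; congr 1; omega
    have key : a j * (a 1 ^ r - a (r - 1) ^ r)
        = a 1 ^ j * u j - a (r - 1) ^ (r - j) * u (r - j) := by
      rw [hu j, hu (r - j), show r - (r - j) = j from by omega]
      linear_combination a j * e2 - a j * e1
    have hj' : a j = (a 1 ^ j * u j - a (r - 1) ^ (r - j) * u (r - j))
        / (a 1 ^ r - a (r - 1) ^ r) := by
      rw [← key, mul_div_cancel_right₀ _ hD]
    rw [hj']
    exact div_mem
      (sub_mem (mul_mem (pow_mem htE j) (huE j h1 h2))
        (mul_mem (pow_mem hsE (r - j)) (huE (r - j) (by omega) (by omega))))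
      (sub_mem (pow_mem htE r) (pow_mem hsE r))
  have hpoly : ∀ p : R, algebraMap R K p ∈ E1 := by
    intro p
    induction p using MvPolynomial.induction_on with
    | C c =>
      rw [← MvPolynomial.algebraMap_eq, ← IsScalarTower.algebraMap_apply]
      exact hFE _ (F.algebraMap_mem c)
    | add p q hp hq => rw [map_add]; exact add_mem hp hq
    | mul_X p i hp =>
      rw [map_mul]
      refine mul_mem hp ?_
      rw [← ha i]
      exact haE (i.1 + 1) (by omega) (by have := i.2; omega)
  have hE1top : E1 = ⊤ := by
    rw [eq_top_iff]
    intro x _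
    obtain ⟨p, q, _, rfl⟩ := IsFractionRing.div_surjective (A := R) x
    exact div_mem (hpoly p) (hpoly q)
  -- a 1 is integral of degree ≤ 2r over F
  have hts : u (r - 1) / 2 = a 1 * a (r - 1) := by
    rw [h2ts, mul_div_cancel_left₀ _ h2K]
  set u1F : F := ⟨u 1, huF 1 le_rfl hr1⟩ with hu1F
  set urF : F := ⟨u (r - 1), huF (r - 1) hr1 le_rfl⟩ with hurF
  set P : Polynomial F := Polynomial.X ^ (2 * r) +
    (Polynomial.C (-u1F) * Polynomial.X ^ r + Polynomial.C ((urF / 2) ^ r)) with hPdef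
  have hqdeg : (Polynomial.C (-u1F) * Polynomial.X ^ r
      + Polynomial.C ((urF / 2) ^ r)).natDegree ≤ r := by
    apply le_trans (Polynomial.natDegree_add_le _ _)
    apply max_le
    · exact le_trans (Polynomial.natDegree_mul_le) (by simp)
    · simp
  have hPmonic : P.Monic := by
    apply Polynomial.monic_X_pow_add
    calc (Polynomial.C (-u1F) * Polynomial.X ^ r
          + Polynomial.C ((urF / 2) ^ r)).degree
        ≤ ((Polynomial.C (-u1F) * Polynomial.X ^ r
          + Polynomial.C ((urF / 2) ^ r)).natDegree : WithBot ℕ) :=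
          Polynomial.degree_le_natDegree
      _ ≤ (r : WithBot ℕ) := by exact_mod_cast hqdeg
      _ < ((2 * r : ℕ) : WithBot ℕ) := by exact_mod_cast (by omega : r < 2 * r)
  have halg1 : algebraMap F K u1F = u 1 := rfl
  have halg2 : algebraMap F K urF = u (r - 1) := rfl
  have hPt : Polynomial.aeval (a 1) P = 0 := by
    rw [hPdef]
    simp only [map_add, map_mul, map_pow, Polynomial.aeval_X, Polynomial.aeval_C, map_neg]
    have hcF : algebraMap F K (urF / 2) = a 1 * a (r - 1) := by
      rw [map_div₀, halg2, map_ofNat, hts]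
    rw [hcF, halg1, hu1, two_mul, pow_add, mul_pow]
    ring
  have hint : IsIntegral F (a 1) := ⟨P, hPmonic, hPt⟩
  have hFD1 : FiniteDimensional F E1 := IntermediateField.adjoin.finiteDimensional hint
  have hFDtop : FiniteDimensional F (⊤ : IntermediateField F K) := hE1top ▸ hFD1
  have hFD : FiniteDimensional F K :=
    Module.Finite.equiv (IntermediateField.topEquiv (F := F) (E := K)).toLinearEquiv
  have hle : Module.finrank F K ≤ 2 * r := by
    rw [← IntermediateField.finrank_top' (F := F) (E := K), ← hE1top, hE1def,
      IntermediateField.adjoin.finrank hint]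
    have hdeg : (minpoly F (a 1)).natDegree ≤ P.natDegree :=
      Polynomial.natDegree_le_natDegree (minpoly.min F (a 1) hPmonic hPt)
    refine le_trans hdeg ?_
    rw [hPdef]
    apply le_trans (Polynomial.natDegree_add_le _ _)
    apply max_le
    · simp
    · exact le_trans hqdeg (by omega)
  ----------------------------------------------------------------
  -- Part 2 : lower bound via 2r distinct F-automorphisms of K
  ----------------------------------------------------------------
  have hηr : η ^ r = 1 := hη.pow_eq_one
  have hdvd : ∀ e : ℕ, r ∣ e → η ^ e = 1 := by
    rintro e ⟨c, rfl⟩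
    rw [pow_mul, hηr, one_pow]
  have hcoef : ∀ e : ℕ, r ∣ e → algebraMap k K (η ^ e) = 1 := by
    intro e he
    rw [hdvd e he, map_one]
  have hterm : ∀ (p q n : ℕ) (x y : K),
      (algebraMap k K (η ^ p) * x) ^ n * (algebraMap k K (η ^ q) * y)
      = algebraMap k K (η ^ (p * n + q)) * (x ^ n * y) := by
    intro p q n x y
    rw [mul_pow, ← map_pow, ← pow_mul, mul_mul_mul_comm, ← map_mul, ← pow_add]
  have hdvd1 : ∀ m i : ℕ, i ≤ r → r ∣ m * 1 * (r - i) + m * i := by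
    intro m i hi
    refine ⟨m, ?_⟩
    rw [Nat.mul_one, ← Nat.mul_add, show r - i + i = r from by omega, Nat.mul_comm]
  have hdvd2 : ∀ m x : ℕ, r ∣ m * (r - 1) * x + m * x := by
    intro m x
    refine ⟨m * x, ?_⟩
    have e : m * (r - 1) * x + m * x = ((r - 1) + 1) * (m * x) := by ring
    rw [e, show r - 1 + 1 = r from by omega]
  -- construction of the automorphisms
  have hPsi : ∀ (m : ℕ) (b : Bool), ∃ ψ : K ≃ₐ[k] K, ∀ j, 1 ≤ j → j ≤ r - 1 →
      ψ (a j) = algebraMap k K (η ^ (m * (cond b (r - j) j))) * a (cond b (r - j) j) := by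
    intro m b
    have hcd : ∀ i : Fin (r - 1),
        (η ^ (m * (i.1 + 1))) * (η ^ (m * (i.1 + 1) * (r - 1))) = 1 := by
      intro i
      rw [← pow_add]
      apply hdvd
      refine ⟨m * (i.1 + 1), ?_⟩
      have e : m * (i.1 + 1) + m * (i.1 + 1) * (r - 1) = ((r - 1) + 1) * (m * (i.1 + 1)) := by
        ring
      rw [e, show r - 1 + 1 = r from by omega]
    cases b with
    | false =>
      refine ⟨IsFractionRing.algEquivOfAlgEquiv
        (dScale (fun i : Fin (r - 1) => η ^ (m * (i.1 + 1)))
          (fun i : Fin (r - 1) => η ^ (m * (i.1 + 1) * (r - 1))) hcd), ?_⟩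
      intro j h1 h2
      simp only [cond_false]
      rw [haX j h1 h2, IsFractionRing.algEquivOfAlgEquiv_algebraMap, dScale_X, map_mul,
        ← MvPolynomial.algebraMap_eq, ← IsScalarTower.algebraMap_apply, ← haX j h1 h2]
      simp only [Fin.val_mk]
      rw [show j - 1 + 1 = j from by omega]
    | true =>
      have hperm : Function.Involutive
          (fun i : Fin (r - 1) => (⟨r - 2 - i.1, by have := i.2; omega⟩ : Fin (r - 1))) := by
        intro i
        have h2i := i.2
        apply Fin.ext
        simp only [Fin.val_mk]
        omega
      set πp : Equiv.Perm (Fin (r - 1)) := hperm.toPerm with hπpdef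
      refine ⟨IsFractionRing.algEquivOfAlgEquiv
        ((MvPolynomial.renameEquiv k πp).trans
          (dScale (fun i : Fin (r - 1) => η ^ (m * (i.1 + 1)))
            (fun i : Fin (r - 1) => η ^ (m * (i.1 + 1) * (r - 1))) hcd)), ?_⟩
      intro j h1 h2
      simp only [cond_true]
      rw [haX j h1 h2, IsFractionRing.algEquivOfAlgEquiv_algebraMap]
      have hrename : ((MvPolynomial.renameEquiv k πp).trans
          (dScale (fun i : Fin (r - 1) => η ^ (m * (i.1 + 1)))
            (fun i : Fin (r - 1) => η ^ (m * (i.1 + 1) * (r - 1))) hcd))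
          (MvPolynomial.X (⟨j - 1, by omega⟩ : Fin (r - 1)))
          = MvPolynomial.C (η ^ (m * (r - j)))
            * MvPolynomial.X (⟨r - 2 - (j - 1), by omega⟩ : Fin (r - 1)) := by
        rw [AlgEquiv.trans_apply, MvPolynomial.renameEquiv_apply, MvPolynomial.rename_X]
        have hpe : πp (⟨j - 1, by omega⟩ : Fin (r - 1))
            = (⟨r - 2 - (j - 1), by omega⟩ : Fin (r - 1)) := rfl
        rw [hpe, dScale_X]
        simp only [Fin.val_mk]
        rw [show r - 2 - (j - 1) + 1 = r - j from by omega]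
      rw [hrename, map_mul, ← MvPolynomial.algebraMap_eq, ← IsScalarTower.algebraMap_apply,
        ← show a (r - j) = algebraMap R K
            (MvPolynomial.X (⟨r - 2 - (j - 1), by omega⟩ : Fin (r - 1))) from by
          rw [haX (r - j) (by omega) (by omega)]
          exact congrArg _ (congrArg MvPolynomial.X
            (Fin.ext (by simp only [Fin.val_mk]; omega)))]
  choose Ψ hΨ using hPsi
  -- the automorphisms fix every dihedral invariant, hence all of F
  have hfix : ∀ (m : ℕ) (b : Bool) (i : ℕ), 1 ≤ i → i ≤ r - 1 → Ψ m b (u i) = u i := by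
    intro m b i h1 h2
    have hi1 : 1 ≤ r - i := by omega
    have hi2 : r - i ≤ r - 1 := by omega
    rw [hu i, map_add, map_mul, map_mul, map_pow, map_pow]
    cases b with
    | false =>
      have e1 := hΨ m false 1 le_rfl hr1
      have e2 := hΨ m false i h1 h2
      have e3 := hΨ m false (r - 1) hr1 le_rfl
      have e4 := hΨ m false (r - i) hi1 hi2
      simp only [cond_false] at e1 e2 e3 e4
      rw [e1, e2, e3, e4, hterm, hterm, hcoef _ (hdvd1 m i (by omega)),
        hcoef _ (hdvd2 m (r - i)), one_mul, one_mul]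
    | true =>
      have e1 := hΨ m true 1 le_rfl hr1
      have e2 := hΨ m true i h1 h2
      have e3 := hΨ m true (r - 1) hr1 le_rfl
      have e4 := hΨ m true (r - i) hi1 hi2
      simp only [cond_true] at e1 e2 e3 e4
      rw [show r - (r - 1) = 1 from by omega] at e3
      rw [show r - (r - i) = i from by omega] at e4
      rw [e1, e2, e3, e4, hterm, hterm, hcoef _ (hdvd2 m (r - i)),
        hcoef _ (hdvd1 m i (by omega)), one_mul, one_mul, add_comm]
  have hfixF : ∀ (m : ℕ) (b : Bool), ∀ x ∈ F, Ψ m b x = x := by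
    intro m b
    have hle' : F ≤ fixedIF (Ψ m b).toAlgHom := by
      rw [hFdef]
      apply IntermediateField.adjoin_le_iff.mpr
      rintro x ⟨i, h1, h2, rfl⟩
      exact hfix m b i h1 h2
    exact fun x hx => hle' hx
  -- the family of F-algebra automorphisms
  let G : Fin r × Bool → (K ≃ₐ[F] K) := fun p =>
    { (Ψ p.1.1 p.2).toRingEquiv with
      commutes' := fun x => hfixF p.1.1 p.2 x.1 x.2 }
  have hGapp : ∀ p x, G p x = Ψ p.1.1 p.2 x := fun p x => rfl
  have hη0 : η ≠ 0 := hη.ne_zero (by omega)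
  have hcross : ∀ e e' : ℕ,
      algebraMap k K (η ^ e) * a 1 ≠ algebraMap k K (η ^ e') * a (r - 1) := by
    intro e e' h
    rw [haX 1 le_rfl hr1, haX (r - 1) hr1 le_rfl] at h
    have h' : algebraMap R K (MvPolynomial.C (η ^ e)
          * MvPolynomial.X (⟨1 - 1, by omega⟩ : Fin (r - 1)))
        = algebraMap R K (MvPolynomial.C (η ^ e')
          * MvPolynomial.X (⟨r - 1 - 1, by omega⟩ : Fin (r - 1))) := by
      rw [map_mul, map_mul, ← MvPolynomial.algebraMap_eq, ← IsScalarTower.algebraMap_apply,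
        ← IsScalarTower.algebraMap_apply]
      exact h
    have h'' := hrinj h'
    have hc := congrArg
      (MvPolynomial.coeff (Finsupp.single (⟨1 - 1, by omega⟩ : Fin (r - 1)) 1)) h''
    rw [MvPolynomial.coeff_C_mul, MvPolynomial.coeff_C_mul, MvPolynomial.coeff_X] at hc
    have hX0 : MvPolynomial.coeff (Finsupp.single (⟨1 - 1, by omega⟩ : Fin (r - 1)) 1)
        (MvPolynomial.X (⟨r - 1 - 1, by omega⟩ : Fin (r - 1)) : R) = 0 := by
      rw [MvPolynomial.coeff_X']
      apply if_neg
      intro hcontr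
      rw [Finsupp.single_eq_single_iff] at hcontr
      rcases hcontr with ⟨hi, -⟩ | ⟨h1, -⟩
      · rw [Fin.ext_iff] at hi
        simp only [Fin.val_mk] at hi
        omega
      · exact one_ne_zero h1
    rw [hX0, mul_zero, if_pos rfl, mul_one] at hc
    exact pow_ne_zero e hη0 hc
  have hGinj : Function.Injective G := by
    rintro ⟨⟨m, hm⟩, b⟩ ⟨⟨m', hm'⟩, b'⟩ hpq
    have ea1 : Ψ m b (a 1) = Ψ m' b' (a 1) := by
      rw [← hGapp ⟨⟨m, hm⟩, b⟩, ← hGapp ⟨⟨m', hm'⟩, b'⟩, hpq]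
    have ea2 : Ψ m b (a (r - 1)) = Ψ m' b' (a (r - 1)) := by
      rw [← hGapp ⟨⟨m, hm⟩, b⟩, ← hGapp ⟨⟨m', hm'⟩, b'⟩, hpq]
    have hv1 := hΨ m b 1 le_rfl hr1
    have hv1' := hΨ m' b' 1 le_rfl hr1
    have hv2 := hΨ m b (r - 1) hr1 le_rfl
    have hv2' := hΨ m' b' (r - 1) hr1 le_rfl
    cases b <;> cases b' <;>
      simp only [cond_false, cond_true] at hv1 hv1' hv2 hv2'
    · -- false false
      rw [hv1, hv1'] at ea1
      have := mul_right_cancel₀ ht0 ea1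
      have hmm := hη.pow_inj (by omega : m * 1 < r) (by omega : m' * 1 < r) (hkinj this)
      simp only [Prod.mk.injEq, Fin.mk.injEq]
      exact ⟨by omega, trivial⟩
    · -- false true
      rw [hv1, hv1'] at ea1
      exact absurd ea1 (hcross _ _)
    · -- true false
      rw [hv1, hv1'] at ea1
      exact absurd ea1.symm (hcross _ _)
    · -- true true
      rw [hv2, hv2', show r - (r - 1) = 1 from by omega] at ea2
      have := mul_right_cancel₀ ht0 ea2
      have hmm := hη.pow_inj (by omega : m * 1 < r) (by omega : m' * 1 < r) (hkinj this)
      simp only [Prod.mk.injEq, Fin.mk.injEq]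
      exact ⟨by omega, trivial⟩
  haveI := hFD
  have hcard1 : 2 * r ≤ Fintype.card (K ≃ₐ[F] K) := by
    have hc := Fintype.card_le_of_injective G hGinj
    rw [Fintype.card_prod, Fintype.card_fin, Fintype.card_bool] at hc
    omega
  have hcard2 : Fintype.card (K ≃ₐ[F] K) ≤ Module.finrank F K := by
    have hfr : Module.finrank
        (IntermediateField.fixedField (⊤ : Subgroup (K ≃ₐ[F] K))) K
        = Fintype.card (K ≃ₐ[F] K) := by
      rw [IntermediateField.finrank_fixedField_eq_card]
      exact (Nat.card_congr Subgroup.topEquiv.toEquiv).trans Nat.card_eq_fintype_card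
    set E := IntermediateField.fixedField (⊤ : Subgroup (K ≃ₐ[F] K)) with hEdef
    have htower := Module.finrank_mul_finrank F E K
    rw [hfr] at htower
    haveI : FiniteDimensional F E := FiniteDimensional.left F E K
    calc Fintype.card (K ≃ₐ[F] K)
        ≤ Module.finrank F E * Fintype.card (K ≃ₐ[F] K) :=
          Nat.le_mul_of_pos_left _ Module.finrank_pos
      _ = Module.finrank F K := htower
  exact ⟨hFD, le_antisymm hle (le_trans hcard1 hcard2)⟩
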